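/- Let $y_1, y_2 > 0$ with $y_1 > 1$ and $y_2 > 1$, $h = \sqrt{y_1+y_2-y_1y_2}$ real positive, $x_l, x_r = \frac{y_2(h \mp y_1)^2}{(y_1+y_2)^2}$, $\alpha = y_1/y_2$. Then $\int_{x_l}^{x_r} \frac{(\alpha+1)\sqrt{(x_r-x)(x-x_l)}}{2\pi y_1 x(1-x)}\,dx = \frac{h^2}{y_1 y_2}$. -/

import Mathlib

open Real

open intervalIntegral in

set_option maxHeartbeats 1000000 in
lemma key_integral (a b : ℝ) (ha : 0 < a) (hab : a < b) (hb : b < 1) :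
    ∫ x in a..b, Real.sqrt ((b - x) * (x - a)) / (x * (1 - x))
      = π * (1 - Real.sqrt (a * b) - Real.sqrt ((1 - a) * (1 - b))) := by
  have hb0 : 0 < b := ha.trans hab
  have ha1 : a < 1 := hab.trans hb
  have hba : 0 < b - a := sub_pos.2 hab
  set sab := Real.sqrt (a * b) with hsab
  set sd := Real.sqrt ((1 - a) * (1 - b)) with hsd
  have hsabpos : 0 < sab := Real.sqrt_pos.2 (mul_pos ha hb0)
  have hsdpos : 0 < sd := Real.sqrt_pos.2
    (mul_pos (by linarith) (by linarith))
  have hsab2 : sab ^ 2 = a * b := Real.sq_sqrt (mul_pos ha hb0).le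
  have hsd2 : sd ^ 2 = (1 - a) * (1 - b) :=
    Real.sq_sqrt (mul_pos (by linarith : (0:ℝ) < 1 - a) (by linarith)).le
  set F : ℝ → ℝ := fun x =>
    arcsin ((2 * x - a - b) / (b - a))
      - sab * arcsin (((a + b) * x - 2 * (a * b)) / ((b - a) * x))
      + sd * arcsin (((2 - a - b) * (1 - x) - 2 * ((1 - a) * (1 - b))) / ((b - a) * (1 - x)))
    with hF
  have hderiv : ∀ x ∈ Set.Ioo a b,
      HasDerivAt F (Real.sqrt ((b - x) * (x - a)) / (x * (1 - x))) x := by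
    rintro x ⟨hax, hxb⟩
    have hx0 : 0 < x := ha.trans hax
    have hx1 : 0 < 1 - x := by linarith
    have hRpos : 0 < (b - x) * (x - a) := mul_pos (by linarith) (by linarith)
    set r := Real.sqrt ((b - x) * (x - a)) with hr
    have hrpos : 0 < r := Real.sqrt_pos.2 hRpos
    have hr2 : r ^ 2 = (b - x) * (x - a) := Real.sq_sqrt hRpos.le
    -- term 1
    have hs1 : (2 * x - a - b) / (b - a) < 1 := (div_lt_one hba).2 (by linarith)
    have hs2 : -1 < (2 * x - a - b) / (b - a) := by
      rw [neg_lt, ← neg_div, div_lt_one hba]; linarith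
    have hlin : HasDerivAt (fun x : ℝ => (2 * x - a - b) / (b - a)) (2 / (b - a)) x := by
      have h1 : HasDerivAt (fun x : ℝ => 2 * x - a - b) 2 x := by
        simpa using (((hasDerivAt_id x).const_mul 2).sub_const a).sub_const b
      simpa using h1.div_const (b - a)
    have d1 : HasDerivAt (fun y => arcsin ((2 * y - a - b) / (b - a)))
        (1 / Real.sqrt (1 - ((2 * x - a - b) / (b - a)) ^ 2) * (2 / (b - a))) x :=
      ((Real.hasDerivAt_arcsin hs2.ne' hs1.ne).comp x hlin :)
    have e1 : Real.sqrt (1 - ((2 * x - a - b) / (b - a)) ^ 2) = 2 * r / (b - a) := by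
      rw [show 1 - ((2 * x - a - b) / (b - a)) ^ 2 = (2 * r / (b - a)) ^ 2 by
        field_simp
        linear_combination (-4) * hr2]
      exact Real.sqrt_sq (by positivity)
    -- term 2
    have hu1 : ((a + b) * x - 2 * (a * b)) / ((b - a) * x) < 1 := by
      rw [div_lt_one (by positivity)]; nlinarith
    have hu2 : -1 < ((a + b) * x - 2 * (a * b)) / ((b - a) * x) := by
      rw [neg_lt, ← neg_div, div_lt_one (by positivity)]; nlinarith
    have hlin2 : HasDerivAt (fun x : ℝ => ((a + b) * x - 2 * (a * b)) / ((b - a) * x))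
        (((a + b) * ((b - a) * x) - ((a + b) * x - 2 * (a * b)) * (b - a)) / ((b - a) * x) ^ 2) x := by
      have hn : HasDerivAt (fun x : ℝ => (a + b) * x - 2 * (a * b)) (a + b) x := by
        simpa using ((hasDerivAt_id x).const_mul (a + b)).sub_const (2 * (a * b))
      have hd : HasDerivAt (fun x : ℝ => (b - a) * x) (b - a) x := by
        simpa using (hasDerivAt_id x).const_mul (b - a)
      exact hn.div hd (by positivity)
    have d2 : HasDerivAt (fun y => arcsin (((a + b) * y - 2 * (a * b)) / ((b - a) * y)))
        (1 / Real.sqrt (1 - (((a + b) * x - 2 * (a * b)) / ((b - a) * x)) ^ 2) *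
          (((a + b) * ((b - a) * x) - ((a + b) * x - 2 * (a * b)) * (b - a)) / ((b - a) * x) ^ 2)) x :=
      ((Real.hasDerivAt_arcsin hu2.ne' hu1.ne).comp x hlin2 :)
    have e2 : Real.sqrt (1 - (((a + b) * x - 2 * (a * b)) / ((b - a) * x)) ^ 2)
        = 2 * sab * r / ((b - a) * x) := by
      rw [show 1 - (((a + b) * x - 2 * (a * b)) / ((b - a) * x)) ^ 2
          = (2 * sab * r / ((b - a) * x)) ^ 2 by
        field_simp
        linear_combination (-4 * r ^ 2) * hsab2 + (-4 * (a * b)) * hr2]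
      exact Real.sqrt_sq (by positivity)
    -- term 3
    have hw1 : ((2 - a - b) * (1 - x) - 2 * ((1 - a) * (1 - b))) / ((b - a) * (1 - x)) < 1 := by
      rw [div_lt_one (by positivity)]; nlinarith
    have hw2 : -1 < ((2 - a - b) * (1 - x) - 2 * ((1 - a) * (1 - b))) / ((b - a) * (1 - x)) := by
      rw [neg_lt, ← neg_div, div_lt_one (by positivity)]; nlinarith
    have hlin3 : HasDerivAt
        (fun x : ℝ => ((2 - a - b) * (1 - x) - 2 * ((1 - a) * (1 - b))) / ((b - a) * (1 - x)))
        (((-(2 - a - b)) * ((b - a) * (1 - x)) -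
          ((2 - a - b) * (1 - x) - 2 * ((1 - a) * (1 - b))) * (-(b - a))) / ((b - a) * (1 - x)) ^ 2) x := by
      have hn : HasDerivAt (fun x : ℝ => (2 - a - b) * (1 - x) - 2 * ((1 - a) * (1 - b)))
          (-(2 - a - b)) x := by
        have h2 := (((hasDerivAt_const x (1:ℝ)).sub (hasDerivAt_id x)).const_mul
          (2 - a - b)).sub_const (2 * ((1 - a) * (1 - b)))
        rw [show (2 - a - b) * ((0:ℝ) - 1) = -(2 - a - b) by ring] at h2
        exact h2
      have hd : HasDerivAt (fun x : ℝ => (b - a) * (1 - x)) (-(b - a)) x := by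
        have h2 := ((hasDerivAt_const x (1:ℝ)).sub (hasDerivAt_id x)).const_mul (b - a)
        rw [show (b - a) * ((0:ℝ) - 1) = -(b - a) by ring] at h2
        exact h2
      exact hn.div hd (by positivity)
    have d3 : HasDerivAt
        (fun y => arcsin (((2 - a - b) * (1 - y) - 2 * ((1 - a) * (1 - b))) / ((b - a) * (1 - y))))
        (1 / Real.sqrt (1 - (((2 - a - b) * (1 - x) - 2 * ((1 - a) * (1 - b))) / ((b - a) * (1 - x))) ^ 2) *
          (((-(2 - a - b)) * ((b - a) * (1 - x)) -
            ((2 - a - b) * (1 - x) - 2 * ((1 - a) * (1 - b))) * (-(b - a))) / ((b - a) * (1 - x)) ^ 2)) x :=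
      ((Real.hasDerivAt_arcsin hw2.ne' hw1.ne).comp x hlin3 :)
    have e3 : Real.sqrt (1 - (((2 - a - b) * (1 - x) - 2 * ((1 - a) * (1 - b))) / ((b - a) * (1 - x))) ^ 2)
        = 2 * sd * r / ((b - a) * (1 - x)) := by
      rw [show 1 - (((2 - a - b) * (1 - x) - 2 * ((1 - a) * (1 - b))) / ((b - a) * (1 - x))) ^ 2
          = (2 * sd * r / ((b - a) * (1 - x))) ^ 2 by
        field_simp
        linear_combination (-4 * r ^ 2) * hsd2 + (-4 * ((1 - a) * (1 - b))) * hr2]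
      exact Real.sqrt_sq (by positivity)
    have total := (d1.sub (d2.const_mul sab)).add (d3.const_mul sd)
    rw [e1] at d1
    rw [e2] at d2
    rw [e3] at d3
    rw [e1, e2, e3] at total
    have t1 : 1 / (2 * r / (b - a)) * (2 / (b - a)) = 1 / r := by
      rw [one_div_div]; field_simp
    have t2 : sab * (1 / (2 * sab * r / ((b - a) * x)) *
        (((a + b) * ((b - a) * x) - ((a + b) * x - 2 * (a * b)) * (b - a)) / ((b - a) * x) ^ 2))
        = a * b / (x * r) := by
      rw [one_div_div]; field_simp; ring
    have t3 : sd * (1 / (2 * sd * r / ((b - a) * (1 - x))) *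
        (((-(2 - a - b)) * ((b - a) * (1 - x)) -
          ((2 - a - b) * (1 - x) - 2 * ((1 - a) * (1 - b))) * (-(b - a))) / ((b - a) * (1 - x)) ^ 2))
        = -((1 - a) * (1 - b) / ((1 - x) * r)) := by
      rw [one_div_div]; field_simp; ring
    rw [t1, t2, t3] at total
    convert total using 1
    case e'_9 =>
      field_simp
      linear_combination hr2
    all_goals rfl
  have hFcont : ContinuousOn F (Set.Icc a b) := by
    have c1 : ContinuousOn (fun x : ℝ => (2 * x - a - b) / (b - a)) (Set.Icc a b) := by
      fun_prop
    have c2 : ContinuousOn (fun x : ℝ => ((a + b) * x - 2 * (a * b)) / ((b - a) * x)) (Set.Icc a b) := by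
      apply ContinuousOn.div (by fun_prop) (by fun_prop)
      rintro x ⟨hx1, hx2⟩
      have : 0 < x := lt_of_lt_of_le ha hx1
      positivity
    have c3 : ContinuousOn
        (fun x : ℝ => ((2 - a - b) * (1 - x) - 2 * ((1 - a) * (1 - b))) / ((b - a) * (1 - x)))
        (Set.Icc a b) := by
      apply ContinuousOn.div (by fun_prop) (by fun_prop)
      rintro x ⟨hx1, hx2⟩
      have : 0 < 1 - x := by have := lt_of_le_of_lt hx2 hb; linarith
      positivity
    exact ((Real.continuous_arcsin.comp_continuousOn c1).sub
      (continuousOn_const.mul (Real.continuous_arcsin.comp_continuousOn c2))).add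
      (continuousOn_const.mul (Real.continuous_arcsin.comp_continuousOn c3))
  have hint : IntervalIntegrable (fun x => Real.sqrt ((b - x) * (x - a)) / (x * (1 - x)))
      MeasureTheory.volume a b := by
    apply ContinuousOn.intervalIntegrable
    rw [Set.uIcc_of_le hab.le]
    apply ContinuousOn.div (by fun_prop)
    · fun_prop
    · rintro x ⟨hx1, hx2⟩
      have h1 : 0 < x := lt_of_lt_of_le ha hx1
      have h2 : 0 < 1 - x := by have := lt_of_le_of_lt hx2 hb; linarith
      positivity
  rw [integral_eq_sub_of_hasDerivAt_of_le hab.le hFcont hderiv hint]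
  have hFb : F b = π / 2 - sab * (π / 2) - sd * (π / 2) := by
    rw [hF]
    beta_reduce
    rw [show (2 * b - a - b) / (b - a) = (1:ℝ) by rw [div_eq_one_iff_eq hba.ne']; ring]
    rw [show ((a + b) * b - 2 * (a * b)) / ((b - a) * b) = (1:ℝ) by
      rw [div_eq_one_iff_eq (mul_pos hba hb0).ne']; ring]
    rw [show ((2 - a - b) * (1 - b) - 2 * ((1 - a) * (1 - b))) / ((b - a) * (1 - b)) = (-1:ℝ) by
      rw [div_eq_iff (mul_pos hba (by linarith : (0:ℝ) < 1 - b)).ne']; ring]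
    rw [Real.arcsin_one, Real.arcsin_neg_one]
    ring
  have hFa : F a = -(π / 2) + sab * (π / 2) + sd * (π / 2) := by
    rw [hF]
    beta_reduce
    rw [show (2 * a - a - b) / (b - a) = (-1:ℝ) by
      rw [div_eq_iff hba.ne']; ring]
    rw [show ((a + b) * a - 2 * (a * b)) / ((b - a) * a) = (-1:ℝ) by
      rw [div_eq_iff (mul_pos hba ha).ne']; ring]
    rw [show ((2 - a - b) * (1 - a) - 2 * ((1 - a) * (1 - b))) / ((b - a) * (1 - a)) = (1:ℝ) by
      rw [div_eq_one_iff_eq (mul_pos hba (by linarith : (0:ℝ) < 1 - a)).ne']; ring]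
    rw [Real.arcsin_one, Real.arcsin_neg_one]
    ring
  rw [hFb, hFa]; ring

theorem stmt_2 (y1 y2 : ℝ) (hy1 : 1 < y1) (hy2 : 1 < y2)
    (hpos : y1 * y2 < y1 + y2) :
    let h := Real.sqrt (y1 + y2 - y1 * y2)
    let xl := y2 * (h - y1) ^ 2 / (y1 + y2) ^ 2
    let xr := y2 * (h + y1) ^ 2 / (y1 + y2) ^ 2
    let α := y1 / y2
    (∫ x in xl..xr, (α + 1) * Real.sqrt ((xr - x) * (x - xl)) /
        (2 * π * y1 * x * (1 - x))) = h ^ 2 / (y1 * y2) := by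
  intro h xl xr α
  have hy1' : 0 < y1 := by linarith
  have hy2' : 0 < y2 := by linarith
  have hs : 0 < y1 + y2 := by linarith
  have hh2 : h ^ 2 = y1 + y2 - y1 * y2 := Real.sq_sqrt (by linarith)
  have hhpos : 0 < h := Real.sqrt_pos.2 (by linarith)
  have hy1h : h < y1 := by nlinarith
  have hy2h : h < y2 := by nlinarith
  have hxl : xl = y2 * (h - y1) ^ 2 / (y1 + y2) ^ 2 := rfl
  have hxr : xr = y2 * (h + y1) ^ 2 / (y1 + y2) ^ 2 := rfl
  have hα : α = y1 / y2 := rfl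
  have hxlpos : 0 < xl := by
    rw [hxl]
    apply div_pos _ (by positivity)
    nlinarith [mul_pos hy2' (mul_pos (sub_pos.2 hy1h) (sub_pos.2 hy1h))]
  have hxlxr : xl < xr := by
    rw [hxl, hxr, div_lt_div_iff₀ (by positivity) (by positivity)]
    nlinarith [mul_pos (mul_pos (mul_pos hy2' hy1') hhpos) (mul_pos hs hs)]
  have hxr1 : xr < 1 := by
    rw [hxr, div_lt_one (by positivity)]
    nlinarith [mul_pos hy1' (mul_pos (sub_pos.2 hy2h) (sub_pos.2 hy2h))]
  have hmul : xl * xr = (y2 * (y1 - 1) / (y1 + y2)) ^ 2 := by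
    have hq1 : (h - y1) * (h + y1) = (1 - y1) * (y1 + y2) := by linear_combination hh2
    rw [hxl, hxr, div_mul_div_comm,
      show y2 * (h - y1) ^ 2 * (y2 * (h + y1) ^ 2) = (y2 * ((h - y1) * (h + y1))) ^ 2 by ring,
      hq1]
    field_simp
    ring
  have hmul2 : (1 - xl) * (1 - xr) = (y1 * (y2 - 1) / (y1 + y2)) ^ 2 := by
    have hq2 : (y2 - h) * (y2 + h) = (y2 - 1) * (y1 + y2) := by linear_combination -hh2
    have e1 : 1 - xl = y1 * (h + y2) ^ 2 / (y1 + y2) ^ 2 := by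
      have : xl + y1 * (h + y2) ^ 2 / (y1 + y2) ^ 2 = 1 := by
        rw [hxl, ← add_div, div_eq_one_iff_eq (by positivity)]
        linear_combination (y1 + y2) * hh2
      linarith
    have e2 : 1 - xr = y1 * (y2 - h) ^ 2 / (y1 + y2) ^ 2 := by
      have : xr + y1 * (y2 - h) ^ 2 / (y1 + y2) ^ 2 = 1 := by
        rw [hxr, ← add_div, div_eq_one_iff_eq (by positivity)]
        linear_combination (y1 + y2) * hh2
      linarith
    rw [e1, e2, div_mul_div_comm,
      show y1 * (h + y2) ^ 2 * (y1 * (y2 - h) ^ 2) = (y1 * ((y2 - h) * (y2 + h))) ^ 2 by ring,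
      hq2]
    field_simp
  have hsab : Real.sqrt (xl * xr) = y2 * (y1 - 1) / (y1 + y2) := by
    rw [hmul]
    exact Real.sqrt_sq (div_nonneg (mul_nonneg hy2'.le (by linarith)) hs.le)
  have hsd : Real.sqrt ((1 - xl) * (1 - xr)) = y1 * (y2 - 1) / (y1 + y2) := by
    rw [hmul2]
    exact Real.sqrt_sq (div_nonneg (mul_nonneg hy1'.le (by linarith)) hs.le)
  have hconst : (∫ x in xl..xr, (α + 1) * Real.sqrt ((xr - x) * (x - xl)) /
        (2 * π * y1 * x * (1 - x)))
      = ((α + 1) / (2 * π * y1)) * ∫ x in xl..xr, Real.sqrt ((xr - x) * (x - xl)) / (x * (1 - x)) := by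
    rw [← intervalIntegral.integral_const_mul]
    apply intervalIntegral.integral_congr
    intro x _
    beta_reduce
    rw [show 2 * π * y1 * x * (1 - x) = (2 * π * y1) * (x * (1 - x)) by ring,
      mul_div_mul_comm]
  rw [hconst, key_integral xl xr hxlpos hxlxr hxr1, hsab, hsd, hα, hh2]
  have hπ : (π : ℝ) ≠ 0 := Real.pi_ne_zero
  field_simp
  ring
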